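/- Let P be the transition matrix of a block-structured Markov chain on state space S = S₁ ∪ S₂ (disjoint), where transitions between S₁ and S₂ are only possible through a single bottleneck state b ∈ S₁. Then for the successor representation M = (I − γP)^{-1} and any s ∈ S₁, s' ∈ S₂, the entry factorizes as M_{ss'} = E[γ^{T_b} | X_0 = s] · M_{bs'}, where T_b is the first hitting time of b. -/
import Mathlib

open Finset in
lemma contraction_eq_zero {n : ℕ} {γ : ℝ} (hγ1 : γ < 1) (v : Fin n → ℝ)
    (h : ∀ i, ∀ C : ℝ, (∀ j, |v j| ≤ C) → |v i| ≤ γ * C) :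
    ∀ i, v i = 0 := by
  intro i
  have hne : (Finset.univ : Finset (Fin n)).Nonempty := ⟨i, Finset.mem_univ i⟩
  set C := Finset.univ.sup' hne (fun j => |v j|) with hC
  have hCle : ∀ j, |v j| ≤ C := fun j => Finset.le_sup' (fun j => |v j|) (Finset.mem_univ j)
  obtain ⟨j, -, hj⟩ := Finset.exists_mem_eq_sup' hne (fun j => |v j|)
  have h1 : C ≤ γ * C := by
    have := h j C hCle
    rw [← hj] at this
    exact this
  have h2 : |v i| ≤ 0 := by nlinarith [hCle i, abs_nonneg (v i)]
  have := abs_nonneg (v i)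
  have : |v i| = 0 := le_antisymm h2 this
  exact abs_eq_zero.mp this

/-- Bottleneck factorization of the successor representation.
`S = S₁ ∪ S₂` is a partition of the state space, transitions from `S₁` into
`S₂` are only possible through the bottleneck `b ∈ S₁` (i.e. `P x y = 0`
whenever `x ∈ S₁ \ {b}` and `y ∈ S₂`). Then for `M = (I − γP)⁻¹` and any
`s ∈ S₁`, `s' ∈ S₂`, the entry factorizes through the bottleneck:
`M_{ss'} = E[γ^{T_b} | X_0 = s] · M_{bs'}`, where by the first-passage
identity `E[γ^{T_b} | X_0 = s] = M_{sb} / M_{bb}` (`T_b` the first hitting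
time of `b`). -/
theorem sr_bottleneck_factorization (N : ℕ) (P : Matrix (Fin N) (Fin N) ℝ) (γ : ℝ)
    (hP_nonneg : ∀ i j, 0 ≤ P i j) (hP_row : ∀ i, ∑ j, P i j = 1)
    (hγ0 : 0 ≤ γ) (hγ1 : γ < 1)
    (S₁ S₂ : Set (Fin N)) (hpart : S₁ ∪ S₂ = Set.univ) (hdisj : Disjoint S₁ S₂)
    (b : Fin N) (hb : b ∈ S₁)
    (hbottleneck : ∀ x ∈ S₁ \ {b}, ∀ y ∈ S₂, P x y = 0)
    (M : Matrix (Fin N) (Fin N) ℝ) (hM : M = (1 - γ • P)⁻¹) :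
    ∀ s ∈ S₁, ∀ s' ∈ S₂, M s s' = (M s b / M b b) * M b s' := by
  classical
  set A : Matrix (Fin N) (Fin N) ℝ := 1 - γ • P with hA
  -- A is invertible
  have hdet : A.det ≠ 0 := by
    intro hd
    obtain ⟨v, hv0, hv⟩ := (Matrix.exists_mulVec_eq_zero_iff).mpr hd
    have hz : ∀ i, v i = 0 := by
      apply contraction_eq_zero hγ1
      intro i C hCle
      have hi := congrFun hv i
      simp only [Matrix.mulVec, dotProduct, hA, Matrix.sub_apply,
        Matrix.one_apply, Matrix.smul_apply, smul_eq_mul, sub_mul,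
        Finset.sum_sub_distrib, Pi.zero_apply, ite_mul, one_mul, zero_mul,
        Finset.sum_ite_eq, Finset.mem_univ, if_true] at hi
      -- hi : v i - ∑ z, γ * P i z * v z = 0  (or rearranged)
      have hvi : v i = γ * ∑ z, P i z * v z := by
        rw [Finset.mul_sum]
        have hi' : v i = ∑ z, γ * P i z * v z := by linarith [hi]
        rw [hi']
        exact Finset.sum_congr rfl (fun z _ => by ring)
      have hC0 : 0 ≤ C := le_trans (abs_nonneg _) (hCle i)
      calc |v i| = γ * |∑ z, P i z * v z| := by rw [hvi, abs_mul, abs_of_nonneg hγ0]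
        _ ≤ γ * ∑ z, P i z * C := by
            apply mul_le_mul_of_nonneg_left _ hγ0
            refine le_trans (Finset.abs_sum_le_sum_abs _ _) ?_
            apply Finset.sum_le_sum
            intro z _
            rw [abs_mul, abs_of_nonneg (hP_nonneg i z)]
            exact mul_le_mul_of_nonneg_left (hCle z) (hP_nonneg i z)
        _ = γ * C := by rw [← Finset.sum_mul, hP_row, one_mul]
    exact hv0 (funext hz)
  have hAM : A * M = 1 := by
    rw [hM]; exact Matrix.mul_nonsing_inv A (isUnit_iff_ne_zero.mpr hdet)
  have key : ∀ x y, M x y = (if x = y then (1:ℝ) else 0) + γ * ∑ z, P x z * M z y := by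
    intro x y
    have h := congrFun (congrFun hAM x) y
    simp only [Matrix.mul_apply, hA, Matrix.sub_apply, Matrix.one_apply,
      Matrix.smul_apply, smul_eq_mul, sub_mul, Finset.sum_sub_distrib,
      ite_mul, one_mul, zero_mul, Finset.sum_ite_eq, Finset.mem_univ, if_true] at h
    rw [Finset.mul_sum]
    have h' : M x y = (if x = y then (1:ℝ) else 0) + ∑ z, γ * P x z * M z y := by
      linarith [h]
    rw [h']
    congr 1
    exact Finset.sum_congr rfl (fun z _ => by ring)
  -- nonnegativity of the b-column of M
  have hwpos : ∀ x, 0 ≤ M x b := by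
    have hne : (Finset.univ : Finset (Fin N)).Nonempty := ⟨b, Finset.mem_univ b⟩
    obtain ⟨i, -, hi⟩ := Finset.exists_mem_eq_inf' hne (fun x => M x b)
    set m := Finset.univ.inf' hne (fun x => M x b) with hm
    have hmle : ∀ x, m ≤ M x b := fun x => Finset.inf'_le _ (Finset.mem_univ x)
    have h2 : ∑ z, P i z * m ≤ ∑ z, P i z * M z b :=
      Finset.sum_le_sum (fun z _ => mul_le_mul_of_nonneg_left (hmle z) (hP_nonneg i z))
    have h3 : ∑ z, P i z * m = m := by rw [← Finset.sum_mul, hP_row, one_mul]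
    have h4 : (0:ℝ) ≤ if i = b then (1:ℝ) else 0 := by positivity
    have h1 : γ * m ≤ m := by
      calc γ * m = γ * ∑ z, P i z * m := by rw [h3]
        _ ≤ γ * ∑ z, P i z * M z b := mul_le_mul_of_nonneg_left h2 hγ0
        _ ≤ (if i = b then 1 else 0) + γ * ∑ z, P i z * M z b := by linarith [h4]
        _ = M i b := (key i b).symm
        _ = m := hi.symm
    have hm0 : 0 ≤ m := by nlinarith
    intro x; exact le_trans hm0 (hmle x)
  have hMbb : (1:ℝ) ≤ M b b := by
    have hk := key b b
    rw [if_pos rfl] at hk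
    have : 0 ≤ γ * ∑ z, P b z * M z b := by
      apply mul_nonneg hγ0
      exact Finset.sum_nonneg (fun z _ => mul_nonneg (hP_nonneg b z) (hwpos z))
    linarith
  intro s hs s' hs'
  -- the vector u
  set u : Fin N → ℝ := fun y => if y ∈ S₁ then M y s' * M b b - M y b * M b s' else 0 with hu
  have hu0 : ∀ y, u y = 0 := by
    apply contraction_eq_zero hγ1
    intro i C hCle
    have hC0 : 0 ≤ C := le_trans (abs_nonneg _) (hCle i)
    by_cases hiS : i ∈ S₁
    · by_cases hib : i = b
      · have : u i = 0 := by
          simp only [hu, hib, if_pos hb]; ring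
        rw [this, abs_zero]; positivity
      · -- i ∈ S₁ \ {b}
        have his' : i ≠ s' := fun h => (Set.disjoint_left.mp hdisj hiS) (h ▸ hs')
        have hibneq : i ≠ b := hib
        have hrec : u i = γ * ∑ z, P i z * u z := by
          have e1 : M i s' = γ * ∑ z, P i z * M z s' := by
            rw [key i s', if_neg his', zero_add]
          have e2 : M i b = γ * ∑ z, P i z * M z b := by
            rw [key i b, if_neg hibneq, zero_add]
          have : u i = γ * ∑ z, P i z * (M z s' * M b b - M z b * M b s') := by
            simp only [hu, if_pos hiS]
            rw [e1, e2, Finset.mul_sum, Finset.mul_sum, Finset.mul_sum,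
              Finset.sum_mul, Finset.sum_mul, ← Finset.sum_sub_distrib]
            apply Finset.sum_congr rfl
            intro z _; ring
          rw [this]
          congr 1
          apply Finset.sum_congr rfl
          intro z _
          by_cases hzS : z ∈ S₁
          · simp only [hu, if_pos hzS]
          · have hz2 : z ∈ S₂ := by
              have := Set.mem_univ z
              rw [← hpart] at this
              rcases this with h | h
              · exact absurd h hzS
              · exact h
            have : P i z = 0 := hbottleneck i ⟨hiS, hib⟩ z hz2
            simp only [hu, if_neg hzS, this, zero_mul, mul_zero]
        rw [hrec]
        rw [abs_mul, abs_of_nonneg hγ0]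
        apply mul_le_mul_of_nonneg_left _ hγ0
        refine le_trans (Finset.abs_sum_le_sum_abs _ _) ?_
        calc ∑ z, |P i z * u z| ≤ ∑ z, P i z * C := by
              apply Finset.sum_le_sum
              intro z _
              rw [abs_mul, abs_of_nonneg (hP_nonneg i z)]
              exact mul_le_mul_of_nonneg_left (hCle z) (hP_nonneg i z)
          _ = C := by rw [← Finset.sum_mul, hP_row, one_mul]
    · have : u i = 0 := by simp only [hu, if_neg hiS]
      rw [this, abs_zero]; positivity
  have hus := hu0 s
  simp only [hu, if_pos hs] at hus
  have hMbb0 : M b b ≠ 0 := by linarith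
  field_simp
  linarith [hus]
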